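/- Let ω be a dominant affine permutation on n letters and let p be a positive integer. Then the abacus γ(ω) = {z ∈ ℤ : ω(z) ≤ 0} is p-flush if and only if ω is p-stable, i.e., ω(i) < ω(i+p) for all i ∈ ℤ. -/

import Mathlib

/-- The affine symmetric group on `n` letters: bijections `ω : ℤ → ℤ` with
`ω(i+n) = ω(i) + n` for all `i` and `ω(1) + ⋯ + ω(n) = n(n+1)/2`. -/
structure AffinePerm (n : ℕ) where
  toFun : ℤ → ℤ
  bijective : Function.Bijective toFun
  shift : ∀ i : ℤ, toFun (i + n) = toFun i + n
  sum_window : ∑ i ∈ Finset.Icc (1 : ℤ) (n : ℤ), toFun i = n * (n + 1) / 2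

/-- For a dominant affine permutation ω and a positive integer p, the abacus
γ(ω) = {z ∈ ℤ : ω(z) ≤ 0} is p-flush if and only if ω is p-stable, i.e.
ω(i) < ω(i+p) for all i ∈ ℤ. -/
theorem stmt18 (n p : ℕ) (hn : 0 < n) (hp : 0 < p) (ω : AffinePerm n)
    (winv : ℤ → ℤ)
    (h1 : Function.LeftInverse winv ω.toFun)
    (h2 : Function.RightInverse winv ω.toFun)
    (hdom : ∀ i j : ℤ, 1 ≤ i → i < j → j ≤ (n : ℤ) → winv i < winv j) :
    (∀ z : ℤ, ω.toFun z ≤ 0 → ω.toFun (z - (p : ℤ)) ≤ 0)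
      ↔ ∀ i : ℤ, ω.toFun i < ω.toFun (i + (p : ℤ)) := by
  set f := ω.toFun with hf
  have shiftm : ∀ m : ℤ, ∀ x : ℤ, f (x + m * n) = f x + m * n := by
    intro m
    induction m using Int.induction_on with
    | zero => simp
    | succ k ih =>
      intro x
      have h := ω.shift (x + (k : ℤ) * n)
      rw [show x + (k : ℤ) * n + (n : ℤ) = x + ((k : ℤ) + 1) * n by ring, ← hf] at h
      rw [h, ih]; ring
    | pred k ih =>
      intro x
      have h := ω.shift (x + (-(k : ℤ) - 1) * n)
      rw [show x + (-(k : ℤ) - 1) * n + (n : ℤ) = x + (-(k : ℤ)) * n by ring, ← hf] at h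
      have := ih x
      rw [h] at this
      linarith
  constructor
  · intro hflush i
    -- extend flushness to thresholds m*n
    have hflushm : ∀ m z : ℤ, f z ≤ m * n → f (z - p) ≤ m * n := by
      intro m z hz
      have h := hflush (z + (-m) * n) (by rw [shiftm]; linarith)
      rw [show z + (-m) * n - (p : ℤ) = (z - p) + (-m) * n by ring, shiftm] at h
      linarith
    -- winv is shift-equivariant
    have winv_shift : ∀ c m : ℤ, winv (c + m * n) = winv c + m * n := by
      intro c m
      have : f (winv c + m * n) = c + m * n := by rw [shiftm, h2]
      calc winv (c + m * n) = winv (f (winv c + m * n)) := by rw [this]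
        _ = winv c + m * n := h1 _
    -- flushness at every threshold
    have key : ∀ c z : ℤ, f z ≤ c → f (z - p) ≤ c := by
      intro c z hz
      set m : ℤ := (c - 1) / (n : ℤ) with hm
      have hn' : (0 : ℤ) < (n : ℤ) := by exact_mod_cast hn
      have hr1 : m * n < c := by
        have := Int.ediv_mul_le (c - 1) (ne_of_gt hn')
        have h2' := Int.lt_ediv_add_one_mul_self (c - 1) hn'
        nlinarith [Int.ediv_mul_le (c - 1) (ne_of_gt hn'), Int.emod_nonneg (c-1) (ne_of_gt hn'), Int.emod_lt_of_pos (c-1) hn', Int.mul_ediv_add_emod (c-1) (n:ℤ)]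
      have hr2 : c ≤ (m + 1) * n := by
        nlinarith [Int.emod_nonneg (c-1) (ne_of_gt hn'), Int.emod_lt_of_pos (c-1) hn', Int.mul_ediv_add_emod (c-1) (n:ℤ)]
      by_contra hcon
      push_neg at hcon
      have hub : f (z - p) ≤ (m + 1) * n := hflushm (m + 1) z (le_trans hz hr2)
      -- f (z - p) = m*n + s with  c - m*n < s ≤ n
      by_cases hcase : f z ≤ m * n
      · have := hflushm m z hcase
        linarith
      · push_neg at hcase
        set t : ℤ := f z - m * n with ht
        set s : ℤ := f (z - p) - m * n with hs
        have h1t : 1 ≤ t := by linarith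
        have hts : t < s := by linarith
        have hsn : s ≤ (n : ℤ) := by linarith
        have hwt : winv t = z - m * n := by
          have : t + m * n = f z := by ring
          have := winv_shift t m
          rw [‹t + m * n = f z›, h1] at this
          linarith
        have hws : winv s = z - p - m * n := by
          have hsm : s + m * n = f (z - p) := by ring
          have := winv_shift s m
          rw [hsm, h1] at this
          linarith
        have := hdom t s h1t hts hsn
        rw [hwt, hws] at this
        have hp' : (0 : ℤ) < p := by exact_mod_cast hp
        linarith
    have hle : f i ≤ f (i + p) := by
      have := key (f (i + p)) (i + p) le_rfl
      simpa using this
    have hne : f i ≠ f (i + p) := by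
      intro h
      have := h1.injective h
      have hp' : (0 : ℤ) < p := by exact_mod_cast hp
      omega
    exact lt_of_le_of_ne hle hne
  · intro hstab z hz
    have := hstab (z - p)
    rw [sub_add_cancel] at this
    linarith
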